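/- Key identity for the simplicity of the presheaf monad: let f : (X,a) → (Y,b) be a V-functor between V-categories and let Kf = {(φ,y) ∈ PX × Y | ∀ y' ∈ Y, ⨆_{x∈X} b(y', f x) ⊗ φ(x) ≤ b(y', y)}. Then for every x ∈ X and every (φ,y) ∈ Kf, ( ⨅_{x'∈X} (a(x',x) ⇨ φ(x')) ) ⊓ b(f x, y) = φ(x); that is, (Lf)_* = q_f^* ∘ (y_X)_*, where Lf x = (a(−,x), f x). -/

import Mathlib

/-!
Context: `V` is a commutative unital quantale, modelled as a complete lattice
with a commutative monoid structure (unit `k = 1`, tensor `⊗ = *`) satisfying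
the quantale distributivity law (`IsQuantale`).  The residuation `u ⇨ w` is
`sSup {v | u * v ≤ w}`.
-/

universe u v

variable {V : Type u}

/-- Residuation in a quantale: `u ⇨ w = sSup {v | u * v ≤ w}`. -/
noncomputable def resid [CompleteLattice V] [Mul V] (u w : V) : V :=
  sSup {v | u * v ≤ w}

/-- `(X, a)` is a `V`-category: `k ≤ a x x` and `a x y ⊗ a y z ≤ a x z`. -/
def IsVCat [CompleteLattice V] [CommMonoid V] {X : Type v} (a : X → X → V) : Prop :=
  (∀ x, (1 : V) ≤ a x x) ∧ ∀ x y z, a x y * a y z ≤ a x z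

/-- A presheaf on the `V`-category `(X, a)`: `a x x' ⊗ φ x' ≤ φ x`. -/
def IsPresheaf [CompleteLattice V] [Mul V] {X : Type v} (a : X → X → V) (φ : X → V) : Prop :=
  ∀ x x', a x x' * φ x' ≤ φ x

/-- The `V`-category structure on presheaves: `â(φ, ψ) = ⨅ x, (φ x ⇨ ψ x)`. -/
noncomputable def ahat [CompleteLattice V] [Mul V] {X : Type v} (φ ψ : X → V) : V :=
  ⨅ x, resid (φ x) (ψ x)

theorem le_resid_iff [CompleteLattice V] [CommMonoid V] [IsQuantale V] {u w z : V} :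
    z ≤ resid u w ↔ u * z ≤ w :=
  Quantale.rightMulResiduation_le_iff_mul_le

/-- Key identity for the simplicity of the presheaf monad:
`(Lf)_* = q_f^* ∘ (y_X)_*`, i.e. for `(φ, y) ∈ K f`,
`â(y_X x, φ) ⊓ b (f x) y = φ x`. -/
theorem presheaf_simplicity_key_identity [CompleteLattice V] [CommMonoid V] [IsQuantale V]
    {X Y : Type v} (a : X → X → V) (b : Y → Y → V)
    (ha : IsVCat a) (hb : IsVCat b)
    (f : X → Y) (hf : ∀ x x', a x x' ≤ b (f x) (f x'))
    (φ : X → V) (y : Y) (hφ : IsPresheaf a φ)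
    (hKf : ∀ y', (⨆ x, b y' (f x) * φ x) ≤ b y' y) (x : X) :
    ((⨅ x', resid (a x' x) (φ x')) ⊓ b (f x) y) = φ x := by
  apply le_antisymm
  · refine le_trans (inf_le_left) ?_
    refine le_trans (iInf_le _ x) ?_
    have h : a x x * resid (a x x) (φ x) ≤ φ x := le_resid_iff.mp le_rfl
    calc resid (a x x) (φ x) = 1 * resid (a x x) (φ x) := (one_mul _).symm
      _ ≤ a x x * resid (a x x) (φ x) := mul_le_mul_left (ha.1 x) _
      _ ≤ φ x := h
  · refine le_inf ?_ ?_
    · refine le_iInf fun x' => le_resid_iff.mpr (hφ x' x)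
    · calc φ x = 1 * φ x := (one_mul _).symm
        _ ≤ b (f x) (f x) * φ x := mul_le_mul_left (le_trans (ha.1 x) (hf x x)) _
        _ ≤ ⨆ x'', b (f x) (f x'') * φ x'' := le_iSup (fun x'' => b (f x) (f x'') * φ x'') x
        _ ≤ b (f x) y := hKf (f x)
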